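/- Each EM iteration does not decrease the likelihood: for every p in the open simplex Δ°, L(T(p)) ≥ L(p). -/

import Mathlib

open Finset

theorem stmt3 (h : ℕ) (hh : 1 ≤ h) (w : Fin h → ℝ) (hw : ∀ j, 0 < w j)
    (ξ ζ : Fin h → ℕ) (hξζ : ∀ j, 1 ≤ ξ j + ζ j)
    (m n : ℕ) (hm : m = ∑ j, ξ j) (hn : n = ∑ j, ζ j)
    (L : (Fin h → ℝ) → ℝ)
    (hL : ∀ p, L p = ∏ j, p j ^ ξ j *
      (∑ k ∈ Finset.univ.filter (fun k => j ≤ k), p k / w k) ^ ζ j)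
    (T : (Fin h → ℝ) → (Fin h → ℝ))
    (hT : ∀ p : Fin h → ℝ, ((∀ j, 0 < p j) ∧ ∑ j, p j = 1) → ∀ j,
      T p j = (↑(m + n) : ℝ)⁻¹ *
        ((ξ j : ℝ) + (w j)⁻¹ * p j *
          ∑ k ∈ Finset.univ.filter (fun k => k ≤ j),
            (ζ k : ℝ) / (∑ l ∈ Finset.univ.filter (fun l => k ≤ l), (w l)⁻¹ * p l)))
    (p : Fin h → ℝ) (hp : (∀ j, 0 < p j) ∧ ∑ j, p j = 1) :
    L p ≤ L (T p) := by
  obtain ⟨hpp, hps⟩ := hp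
  set q := T p with hqdef
  set S : (Fin h → ℝ) → Fin h → ℝ :=
    fun v k => ∑ l ∈ univ.filter (fun l => k ≤ l), v l / w l with hSdef
  have hSrw : ∀ (v : Fin h → ℝ) (k : Fin h),
      (∑ l ∈ univ.filter (fun l => k ≤ l), (w l)⁻¹ * v l) = S v k := by
    intro v k
    exact Finset.sum_congr rfl fun l _ => by rw [inv_mul_eq_div]
  have hSpos : ∀ (v : Fin h → ℝ), (∀ j, 0 < v j) → ∀ k, 0 < S v k := by
    intro v hv k
    apply Finset.sum_pos
    · intro l _; exact div_pos (hv l) (hw l)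
    · exact ⟨k, by simp⟩
  have hSp := hSpos p hpp
  have hmn1 : 1 ≤ m + n := by
    have : (h : ℕ) = ∑ _j : Fin h, 1 := by simp
    calc 1 ≤ h := hh
    _ = ∑ _j : Fin h, 1 := this
    _ ≤ ∑ j, (ξ j + ζ j) := Finset.sum_le_sum fun j _ => hξζ j
    _ = m + n := by rw [hm, hn, Finset.sum_add_distrib]
  set N : ℝ := ((m + n : ℕ) : ℝ) with hNdef
  have hN : 0 < N := by
    have h0 : (0 : ℕ) < m + n := hmn1
    show (0:ℝ) < ((m + n : ℕ) : ℝ)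
    exact_mod_cast h0
  set A : Fin h → ℝ := fun j => ∑ k ∈ univ.filter (fun k => k ≤ j), (ζ k : ℝ) / S p k
    with hAdef
  have hq' : ∀ j, q j = N⁻¹ * ((ξ j : ℝ) + (w j)⁻¹ * p j * A j) := by
    intro j
    rw [hqdef, hT p ⟨hpp, hps⟩ j]
    simp_rw [hSrw p]
    rfl
  have hA0 : ∀ j, 0 ≤ A j :=
    fun j => Finset.sum_nonneg fun k _ => div_nonneg (Nat.cast_nonneg _) (hSp k).le
  have hqpos : ∀ j, 0 < q j := by
    intro j
    rw [hq' j]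
    have hj := hξζ j
    rcases Nat.lt_or_ge 0 (ξ j) with hx | hx
    · have : (0:ℝ) < (ξ j : ℝ) := by exact_mod_cast hx
      have h2 : 0 ≤ (w j)⁻¹ * p j * A j :=
        mul_nonneg (mul_nonneg (inv_nonneg.2 (hw j).le) (hpp j).le) (hA0 j)
      positivity
    · have hz : 1 ≤ ζ j := by omega
      have hAj : 0 < A j := by
        have hmem : j ∈ univ.filter (fun k => k ≤ j) := by simp
        have h1 : (ζ j : ℝ) / S p j ≤ A j :=
          Finset.single_le_sum (f := fun k => (ζ k : ℝ) / S p k)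
            (fun k _ => div_nonneg (Nat.cast_nonneg _) (hSp k).le) hmem
        have h2 : 0 < (ζ j : ℝ) / S p j := by
          apply div_pos _ (hSp j); exact_mod_cast hz
        linarith
      have hpos : 0 < (w j)⁻¹ * p j * A j :=
        mul_pos (mul_pos (inv_pos.2 (hw j)) (hpp j)) hAj
      have h0 : (0:ℝ) ≤ (ξ j : ℝ) := Nat.cast_nonneg _
      positivity
  have hSq := hSpos q hqpos
  have swap : ∀ F : Fin h → Fin h → ℝ,
      ∑ j, ∑ k ∈ univ.filter (fun k => k ≤ j), F j k
        = ∑ k, ∑ j ∈ univ.filter (fun j => k ≤ j), F j k := by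
    intro F
    simp_rw [Finset.sum_filter]
    exact Finset.sum_comm
  have hmnN : (m : ℝ) + (n : ℝ) = N := by rw [hNdef]; push_cast; ring
  -- sum of q is 1
  have hqsum : ∑ j, q j = 1 := by
    have expand : ∀ j, q j = N⁻¹ * (ξ j : ℝ)
        + ∑ k ∈ univ.filter (fun k => k ≤ j),
            N⁻¹ * ((w j)⁻¹ * p j * ((ζ k : ℝ) / S p k)) := by
      intro j
      rw [hq' j, mul_add]
      congr 1
      simp only [hAdef]
      rw [Finset.mul_sum, Finset.mul_sum]
    calc ∑ j, q j
        = ∑ j, (N⁻¹ * (ξ j : ℝ)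
            + ∑ k ∈ univ.filter (fun k => k ≤ j),
              N⁻¹ * ((w j)⁻¹ * p j * ((ζ k : ℝ) / S p k))) :=
          Finset.sum_congr rfl fun j _ => expand j
      _ = (∑ j, N⁻¹ * (ξ j : ℝ)) + ∑ k, ∑ j ∈ univ.filter (fun j => k ≤ j),
            N⁻¹ * ((w j)⁻¹ * p j * ((ζ k : ℝ) / S p k)) := by
          rw [Finset.sum_add_distrib, swap]
      _ = N⁻¹ * (m : ℝ) + ∑ k, N⁻¹ * (ζ k : ℝ) := by
          congr 1
          · rw [← Finset.mul_sum, hm, Nat.cast_sum]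
          refine Finset.sum_congr rfl fun k _ => ?_
          have e : ∑ j ∈ univ.filter (fun j => k ≤ j),
              N⁻¹ * ((w j)⁻¹ * p j * ((ζ k : ℝ) / S p k))
              = N⁻¹ * ((ζ k : ℝ) / S p k) * ∑ j ∈ univ.filter (fun j => k ≤ j),
                  (w j)⁻¹ * p j := by
            rw [Finset.mul_sum]
            exact Finset.sum_congr rfl fun j _ => by ring
          rw [e, hSrw p, mul_assoc, div_mul_cancel₀]
          exact (hSp k).ne'
      _ = N⁻¹ * ((m : ℝ) + (n : ℝ)) := by
          rw [← Finset.mul_sum, hn, Nat.cast_sum, mul_add]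
      _ = 1 := by rw [hmnN, inv_mul_cancel₀ hN.ne']
  -- log of L
  have hLlog : ∀ v : Fin h → ℝ, (∀ j, 0 < v j) →
      Real.log (L v) = ∑ j, ((ξ j : ℝ) * Real.log (v j)
        + (ζ j : ℝ) * Real.log (S v j)) := by
    intro v hv
    rw [hL v, Real.log_prod]
    · refine Finset.sum_congr rfl fun j _ => ?_
      have hsv : 0 < S v j := hSpos v hv j
      rw [Real.log_mul (pow_ne_zero _ (hv j).ne') (pow_ne_zero _ hsv.ne'),
        Real.log_pow, Real.log_pow]
    · intro j _
      have hsv : 0 < S v j := hSpos v hv j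
      exact (mul_pos (pow_pos (hv j) _) (pow_pos hsv _)).ne'
  set d : Fin h → ℝ := fun l => Real.log (q l) - Real.log (p l) with hddef
  set r : Fin h → Fin h → ℝ := fun k l => (p l / w l) / S p k with hrdef
  have hrsum : ∀ k, ∑ l ∈ univ.filter (fun l => k ≤ l), r k l = 1 := by
    intro k
    simp only [hrdef]
    rw [← Finset.sum_div]
    exact div_self (hSp k).ne'
  -- Jensen per k
  have jensen : ∀ k, ∑ l ∈ univ.filter (fun l => k ≤ l), r k l * d l
      ≤ Real.log (S q k) - Real.log (S p k) := by
    intro k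
    have hconc : ConcaveOn ℝ (Set.Ioi 0) Real.log := strictConcaveOn_log_Ioi.concaveOn
    have hJ := hconc.le_map_sum (t := univ.filter (fun l => k ≤ l)) (w := r k)
      (p := fun l => q l / p l)
      (fun l _ => div_nonneg (div_nonneg (hpp l).le (hw l).le) (hSp k).le)
      (hrsum k)
      (fun l _ => Set.mem_Ioi.2 (div_pos (hqpos l) (hpp l)))
    have e1 : ∑ l ∈ univ.filter (fun l => k ≤ l), r k l • (q l / p l)
        = S q k / S p k := by
      calc ∑ l ∈ univ.filter (fun l => k ≤ l), r k l • (q l / p l)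
          = ∑ l ∈ univ.filter (fun l => k ≤ l), (q l / w l) / S p k := by
            refine Finset.sum_congr rfl fun l _ => ?_
            simp only [hrdef, smul_eq_mul]
            field_simp [(hpp l).ne', (hw l).ne', (hSp k).ne']
        _ = S q k / S p k := by rw [← Finset.sum_div]
    rw [e1, Real.log_div (hSq k).ne' (hSp k).ne'] at hJ
    refine le_trans (le_of_eq ?_) hJ
    refine Finset.sum_congr rfl fun l _ => ?_
    rw [smul_eq_mul, Real.log_div (hqpos l).ne' (hpp l).ne']
  -- coefficient identity
  have hNq : ∀ l, N * q l = (ξ l : ℝ)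
      + ∑ k ∈ univ.filter (fun k => k ≤ l), (ζ k : ℝ) * r k l := by
    intro l
    rw [hq' l, ← mul_assoc, mul_inv_cancel₀ hN.ne', one_mul]
    congr 1
    simp only [hAdef, hrdef]
    rw [Finset.mul_sum]
    refine Finset.sum_congr rfl fun k _ => ?_
    field_simp
  -- KL nonnegativity
  have hKL : 0 ≤ ∑ l, q l * d l := by
    have hterm : ∀ l, q l - p l ≤ q l * d l := by
      intro l
      have h1 := Real.log_le_sub_one_of_pos (div_pos (hpp l) (hqpos l))
      have h2 : Real.log (p l / q l) = - d l := by
        rw [Real.log_div (hpp l).ne' (hqpos l).ne']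
        simp only [hddef]
        ring
      rw [h2] at h1
      have h3 : p l / q l * q l = p l := div_mul_cancel₀ _ (hqpos l).ne'
      have h4 := mul_le_mul_of_nonneg_left h1 (hqpos l).le
      have h5 : q l * (p l / q l - 1) = p l - q l := by
        rw [mul_sub, mul_div_cancel₀ _ (hqpos l).ne', mul_one]
      rw [h5] at h4
      nlinarith [h4]
    calc (0:ℝ) = ∑ l, (q l - p l) := by
          rw [Finset.sum_sub_distrib, hqsum, hps]; ring
      _ ≤ ∑ l, q l * d l := Finset.sum_le_sum fun l _ => hterm l
  -- main inequality on logs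
  have main : ∑ j, ((ξ j : ℝ) * Real.log (p j) + (ζ j : ℝ) * Real.log (S p j))
      ≤ ∑ j, ((ξ j : ℝ) * Real.log (q j) + (ζ j : ℝ) * Real.log (S q j)) := by
    rw [← sub_nonneg, ← Finset.sum_sub_distrib]
    have step1 : ∀ j, (ξ j : ℝ) * d j
        + (ζ j : ℝ) * ∑ l ∈ univ.filter (fun l => j ≤ l), r j l * d l
        ≤ ((ξ j : ℝ) * Real.log (q j) + (ζ j : ℝ) * Real.log (S q j))
          - ((ξ j : ℝ) * Real.log (p j) + (ζ j : ℝ) * Real.log (S p j)) := by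
      intro j
      have h1 : (ζ j : ℝ) * ∑ l ∈ univ.filter (fun l => j ≤ l), r j l * d l
          ≤ (ζ j : ℝ) * (Real.log (S q j) - Real.log (S p j)) :=
        mul_le_mul_of_nonneg_left (jensen j) (Nat.cast_nonneg _)
      have h2 : ((ξ j : ℝ) * Real.log (q j) + (ζ j : ℝ) * Real.log (S q j))
          - ((ξ j : ℝ) * Real.log (p j) + (ζ j : ℝ) * Real.log (S p j))
          = (ξ j : ℝ) * d j + (ζ j : ℝ) * (Real.log (S q j) - Real.log (S p j)) := by
        simp only [hddef]; ring
      linarith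
    have identity : ∑ j, ((ξ j : ℝ) * d j
        + (ζ j : ℝ) * ∑ l ∈ univ.filter (fun l => j ≤ l), r j l * d l)
        = N * ∑ l, q l * d l := by
      calc ∑ j, ((ξ j : ℝ) * d j
            + (ζ j : ℝ) * ∑ l ∈ univ.filter (fun l => j ≤ l), r j l * d l)
          = ∑ j, (ξ j : ℝ) * d j
            + ∑ j, ∑ l ∈ univ.filter (fun l => j ≤ l), (ζ j : ℝ) * (r j l * d l) := by
            rw [Finset.sum_add_distrib]
            congr 1
            exact Finset.sum_congr rfl fun j _ => Finset.mul_sum _ _ _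
        _ = ∑ l, (ξ l : ℝ) * d l
            + ∑ l, ∑ j ∈ univ.filter (fun j => j ≤ l), (ζ j : ℝ) * (r j l * d l) := by
            congr 1
            exact (swap (fun l j => (ζ j : ℝ) * (r j l * d l))).symm
        _ = ∑ l, ((ξ l : ℝ)
            + ∑ j ∈ univ.filter (fun j => j ≤ l), (ζ j : ℝ) * r j l) * d l := by
            rw [← Finset.sum_add_distrib]
            refine Finset.sum_congr rfl fun l _ => ?_
            rw [add_mul, Finset.sum_mul]
            congr 1
            exact Finset.sum_congr rfl fun j _ => by ring
        _ = ∑ l, (N * q l) * d l := by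
            refine Finset.sum_congr rfl fun l _ => ?_
            rw [hNq l]
        _ = N * ∑ l, q l * d l := by
            rw [Finset.mul_sum]
            exact Finset.sum_congr rfl fun l _ => by ring
    calc (0:ℝ) ≤ N * ∑ l, q l * d l := mul_nonneg hN.le hKL
      _ = ∑ j, ((ξ j : ℝ) * d j
          + (ζ j : ℝ) * ∑ l ∈ univ.filter (fun l => j ≤ l), r j l * d l) :=
        identity.symm
      _ ≤ ∑ j, (((ξ j : ℝ) * Real.log (q j) + (ζ j : ℝ) * Real.log (S q j))
          - ((ξ j : ℝ) * Real.log (p j) + (ζ j : ℝ) * Real.log (S p j))) :=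
        Finset.sum_le_sum fun j _ => step1 j
  -- conclude
  have hLp : 0 < L p := by
    rw [hL]
    exact Finset.prod_pos fun j _ =>
      mul_pos (pow_pos (hpp j) _) (pow_pos (hSp j) _)
  have hLq : 0 < L q := by
    rw [hL]
    exact Finset.prod_pos fun j _ =>
      mul_pos (pow_pos (hqpos j) _) (pow_pos (hSq j) _)
  have hloglog : Real.log (L p) ≤ Real.log (L q) := by
    rw [hLlog p hpp, hLlog q hqpos]
    exact main
  exact (Real.log_le_log_iff hLp hLq).mp hloglog
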